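/- Every equilibrium point of the linear ODE dθ/dt = ΦᵀD(−I+γP)Φ θ + ΦᵀD R is equal to θ* = −(ΦᵀD(γP−I)Φ)⁻¹ΦᵀDR, and θ* is globally asymptotically stable: every solution θ_t converges to θ* as t → ∞. -/

import Mathlib

open Matrix Filter


lemma stepA (n : ℕ) (P : Matrix (Fin n) (Fin n) ℝ) (d : Fin n → ℝ)
    (hPnonneg : ∀ i j, 0 ≤ P i j) (hProw : ∀ i, ∑ j, P i j = 1)
    (hdpos : ∀ i, 0 < d i) (hstat : ∀ j, ∑ i, d i * P i j = d j)
    (y : Fin n → ℝ) :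
    ∑ i, d i * (P.mulVec y i)^2 ≤ ∑ i, d i * (y i)^2 := by
  have h1 : ∀ i, (P.mulVec y i)^2 ≤ ∑ j, P i j * (y j)^2 := by
    intro i
    have hcs := Finset.sum_mul_sq_le_sq_mul_sq Finset.univ
      (fun j => Real.sqrt (P i j)) (fun j => Real.sqrt (P i j) * y j)
    have he : ∀ j, Real.sqrt (P i j) * (Real.sqrt (P i j) * y j) = P i j * y j := by
      intro j
      rw [← mul_assoc, Real.mul_self_sqrt (hPnonneg i j)]
    have h2 : ∀ j, Real.sqrt (P i j) ^ 2 = P i j := fun j => Real.sq_sqrt (hPnonneg i j)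
    have h3 : ∀ j, (Real.sqrt (P i j) * y j) ^ 2 = P i j * (y j)^2 := by
      intro j; rw [mul_pow, h2]
    simp only [he, h2, h3] at hcs
    calc (P.mulVec y i)^2 = (∑ j, P i j * y j)^2 := by simp [Matrix.mulVec, dotProduct]
    _ ≤ (∑ j, P i j) * (∑ j, P i j * (y j)^2) := hcs
    _ = ∑ j, P i j * (y j)^2 := by rw [hProw i, one_mul]
  calc ∑ i, d i * (P.mulVec y i)^2 ≤ ∑ i, d i * ∑ j, P i j * (y j)^2 := by
        apply Finset.sum_le_sum; intro i _
        exact mul_le_mul_of_nonneg_left (h1 i) (hdpos i).le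
  _ = ∑ j, (∑ i, d i * P i j) * (y j)^2 := by
        simp only [Finset.mul_sum, Finset.sum_mul]
        rw [Finset.sum_comm]
        simp [mul_assoc]
  _ = ∑ j, d j * (y j)^2 := by simp [hstat]

lemma negdef (n q : ℕ) (P : Matrix (Fin n) (Fin n) ℝ) (d : Fin n → ℝ) (γ : ℝ)
    (Φ : Matrix (Fin n) (Fin q) ℝ)
    (hPnonneg : ∀ i j, 0 ≤ P i j) (hProw : ∀ i, ∑ j, P i j = 1)
    (hdpos : ∀ i, 0 < d i) (hstat : ∀ j, ∑ i, d i * P i j = d j)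
    (hγ0 : 0 < γ) (hγ1 : γ < 1)
    (hΦ : Function.Injective Φ.mulVec)
    (x : Fin q → ℝ) (hx : x ≠ 0) :
    x ⬝ᵥ (Φᵀ * Matrix.diagonal d * (γ • P - 1) * Φ).mulVec x < 0 := by
  set y : Fin n → ℝ := Φ.mulVec x with hy
  have hy0 : y ≠ 0 := by
    intro h
    exact hx (hΦ (by rw [← hy, h, Matrix.mulVec_zero]))
  -- rewrite quadratic form
  have hform : x ⬝ᵥ (Φᵀ * Matrix.diagonal d * (γ • P - 1) * Φ).mulVec x
      = ∑ i, d i * y i * (γ * P.mulVec y i - y i) := by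
    rw [← Matrix.mulVec_mulVec, ← Matrix.mulVec_mulVec, ← Matrix.mulVec_mulVec,
      Matrix.dotProduct_mulVec, Matrix.vecMul_transpose, ← hy]
    have : (γ • P - 1).mulVec y = fun i => γ * P.mulVec y i - y i := by
      funext i
      rw [Matrix.sub_mulVec]
      simp [Matrix.smul_mulVec, Matrix.one_mulVec]
    rw [this]
    simp [Matrix.mulVec, dotProduct, Matrix.diagonal, mul_comm, mul_assoc, mul_left_comm]
  rw [hform]
  have hA := stepA n P d hPnonneg hProw hdpos hstat y
  have hB : ∑ i, d i * y i * P.mulVec y i ≤ ∑ i, d i * (y i)^2 := by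
    have hle : ∀ i, d i * y i * P.mulVec y i ≤ d i * ((y i)^2 + (P.mulVec y i)^2) / 2 := by
      intro i
      have h2 : y i * P.mulVec y i ≤ ((y i)^2 + (P.mulVec y i)^2)/2 := by nlinarith [sq_nonneg (y i - P.mulVec y i)]
      calc d i * y i * P.mulVec y i = d i * (y i * P.mulVec y i) := by ring
      _ ≤ d i * (((y i)^2 + (P.mulVec y i)^2)/2) := mul_le_mul_of_nonneg_left h2 (hdpos i).le
      _ = d i * ((y i)^2 + (P.mulVec y i)^2) / 2 := by ring
    calc ∑ i, d i * y i * P.mulVec y i ≤ ∑ i, d i * ((y i)^2 + (P.mulVec y i)^2) / 2 :=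
        Finset.sum_le_sum (fun i _ => hle i)
    _ = ((∑ i, d i * (y i)^2) + ∑ i, d i * (P.mulVec y i)^2) / 2 := by
        rw [← Finset.sum_add_distrib, ← Finset.sum_div]; congr 1
        apply Finset.sum_congr rfl; intro i _; ring
    _ ≤ ∑ i, d i * (y i)^2 := by linarith
  have hpos : 0 < ∑ i, d i * (y i)^2 := by
    have h0 : ∀ i ∈ Finset.univ, (0:ℝ) ≤ d i * (y i)^2 :=
      fun i _ => mul_nonneg (hdpos i).le (sq_nonneg _)
    rcases Function.ne_iff.mp hy0 with ⟨i, hi⟩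
    simp only [Pi.zero_apply] at hi
    exact Finset.sum_pos' h0 ⟨i, Finset.mem_univ i, mul_pos (hdpos i) (by positivity)⟩
  have expand : ∑ i, d i * y i * (γ * P.mulVec y i - y i)
      = γ * (∑ i, d i * y i * P.mulVec y i) - ∑ i, d i * (y i)^2 := by
    rw [Finset.mul_sum, ← Finset.sum_sub_distrib]
    apply Finset.sum_congr rfl; intro i _; ring
  rw [expand]
  nlinarith [mul_le_mul_of_nonneg_left hB hγ0.le]
open Matrix Finset

lemma dotcont (q : ℕ) (A : Matrix (Fin q) (Fin q) ℝ) :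
    Continuous fun x : Fin q → ℝ => x ⬝ᵥ A.mulVec x := by
  simp only [Matrix.mulVec, dotProduct]
  apply continuous_finset_sum
  intro i _
  exact (continuous_apply i).mul (continuous_finset_sum _ fun j _ =>
    (continuous_const.mul (continuous_apply j)))

lemma coercivity (q : ℕ) (A : Matrix (Fin q) (Fin q) ℝ)
    (hneg : ∀ x : Fin q → ℝ, x ≠ 0 → x ⬝ᵥ A.mulVec x < 0) :
    ∃ c : ℝ, 0 < c ∧ ∀ x : Fin q → ℝ, x ⬝ᵥ A.mulVec x ≤ -c * (x ⬝ᵥ x) := by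
  set S : Set (Fin q → ℝ) := {x | x ⬝ᵥ x = 1} with hS
  by_cases hSne : S.Nonempty
  · have hclosed : IsClosed S := by
      have : Continuous fun x : Fin q → ℝ => x ⬝ᵥ x := by
        simp only [dotProduct]
        exact continuous_finset_sum _ fun j _ => (continuous_apply j).mul (continuous_apply j)
      exact isClosed_eq this continuous_const
    have hbdd : Bornology.IsBounded S := by
      apply Bornology.IsBounded.subset (Metric.isBounded_closedBall (x := (0 : Fin q → ℝ)) (r := 1))
      intro x hx
      simp only [Metric.mem_closedBall, dist_zero_right]
      apply pi_norm_le_iff_of_nonneg zero_le_one |>.mpr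
      intro i
      have h1 : (x i)^2 ≤ 1 := by
        have := Finset.single_le_sum (f := fun j => x j * x j)
          (fun j _ => mul_self_nonneg (x j)) (Finset.mem_univ i)
        have hx1 : ∑ j, x j * x j = 1 := hx
        nlinarith
      have : ‖x i‖ = |x i| := rfl
      nlinarith [abs_nonneg (x i), sq_abs (x i)]
    have hcomp : IsCompact S := Metric.isCompact_of_isClosed_isBounded hclosed hbdd
    obtain ⟨z, hzS, hzmax⟩ := hcomp.exists_isMaxOn hSne (dotcont q A).continuousOn
    have hz0 : z ≠ 0 := by
      intro h
      have : z ⬝ᵥ z = 1 := hzS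
      rw [h] at this; simp at this
    set c : ℝ := -(z ⬝ᵥ A.mulVec z) with hc
    refine ⟨c, by simpa [hc] using hneg z hz0, ?_⟩
    intro x
    by_cases hx : x = 0
    · simp [hx]
    · have hxx : 0 < x ⬝ᵥ x := by
        have : ∀ j ∈ Finset.univ, (0:ℝ) ≤ x j * x j := fun j _ => mul_self_nonneg _
        rcases Function.ne_iff.mp hx with ⟨i, hi⟩
        simp only [Pi.zero_apply] at hi
        exact Finset.sum_pos' this ⟨i, Finset.mem_univ i, mul_self_pos.mpr hi⟩
      set r : ℝ := Real.sqrt (x ⬝ᵥ x) with hr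
      have hrpos : 0 < r := Real.sqrt_pos.mpr hxx
      have hr2 : r * r = x ⬝ᵥ x := Real.mul_self_sqrt hxx.le
      have hu : (r⁻¹ • x) ∈ S := by
        show (r⁻¹ • x) ⬝ᵥ (r⁻¹ • x) = 1
        rw [smul_dotProduct, dotProduct_smul, smul_eq_mul, smul_eq_mul, ← hr2]
        field_simp
      have hmax := hzmax hu
      have hval : (r⁻¹ • x) ⬝ᵥ A.mulVec (r⁻¹ • x) = r⁻¹ * r⁻¹ * (x ⬝ᵥ A.mulVec x) := by
        rw [Matrix.mulVec_smul, smul_dotProduct, dotProduct_smul]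
        simp [smul_eq_mul, mul_assoc]
      have : r⁻¹ * r⁻¹ * (x ⬝ᵥ A.mulVec x) ≤ -c := by
        rw [← hval]
        simpa [hc] using hmax
      have hrr : r⁻¹ * r⁻¹ = (x ⬝ᵥ x)⁻¹ := by
        rw [← mul_inv, hr2]
      rw [hrr] at this
      calc x ⬝ᵥ A.mulVec x = (x ⬝ᵥ x) * ((x ⬝ᵥ x)⁻¹ * (x ⬝ᵥ A.mulVec x)) := by
            field_simp
      _ ≤ (x ⬝ᵥ x) * (-c) := mul_le_mul_of_nonneg_left this hxx.le
      _ = -c * (x ⬝ᵥ x) := by ring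
  · refine ⟨1, one_pos, ?_⟩
    intro x
    by_cases hx : x = 0
    · simp [hx]
    · exfalso
      apply hSne
      have hxx : 0 < x ⬝ᵥ x := by
        have : ∀ j ∈ Finset.univ, (0:ℝ) ≤ x j * x j := fun j _ => mul_self_nonneg _
        rcases Function.ne_iff.mp hx with ⟨i, hi⟩
        simp only [Pi.zero_apply] at hi
        exact Finset.sum_pos' this ⟨i, Finset.mem_univ i, mul_self_pos.mpr hi⟩
      refine ⟨(Real.sqrt (x ⬝ᵥ x))⁻¹ • x, ?_⟩
      show _ ⬝ᵥ _ = 1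
      have hr2 : Real.sqrt (x ⬝ᵥ x) * Real.sqrt (x ⬝ᵥ x) = x ⬝ᵥ x := Real.mul_self_sqrt hxx.le
      have hrpos : 0 < Real.sqrt (x ⬝ᵥ x) := Real.sqrt_pos.mpr hxx
      rw [smul_dotProduct, dotProduct_smul, smul_eq_mul, smul_eq_mul, ← hr2]
      field_simp
      rw [Real.sqrt_sq hrpos.le]


/-- Every equilibrium of `dθ/dt = ΦᵀD(−I+γP)Φ θ + ΦᵀDR` equals
`θ* = −(ΦᵀD(γP−I)Φ)⁻¹ΦᵀDR`, and every solution converges to `θ*` as `t → ∞`. -/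
theorem stmt3 (n q : ℕ) (P : Matrix (Fin n) (Fin n) ℝ) (d : Fin n → ℝ) (γ : ℝ)
    (Φ : Matrix (Fin n) (Fin q) ℝ) (R : Fin n → ℝ)
    (hPnonneg : ∀ i j, 0 ≤ P i j) (hProw : ∀ i, ∑ j, P i j = 1)
    (hdpos : ∀ i, 0 < d i) (hstat : ∀ j, ∑ i, d i * P i j = d j)
    (hγ0 : 0 < γ) (hγ1 : γ < 1)
    (hΦ : Function.Injective Φ.mulVec)
    (D : Matrix (Fin n) (Fin n) ℝ) (hD : D = Matrix.diagonal d)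
    (M : Matrix (Fin q) (Fin q) ℝ) (hM : M = Φᵀ * D * (γ • P - 1) * Φ)
    (θstar : Fin q → ℝ)
    (hθstar : θstar = -((Φᵀ * D * (γ • P - 1) * Φ)⁻¹.mulVec ((Φᵀ * D).mulVec R))) :
    (∀ θ : Fin q → ℝ, M.mulVec θ + (Φᵀ * D).mulVec R = 0 → θ = θstar)
    ∧ (∀ θ : ℝ → (Fin q → ℝ),
        (∀ t : ℝ, HasDerivAt θ (M.mulVec (θ t) + (Φᵀ * D).mulVec R) t) →
        Tendsto θ atTop (nhds θstar)) := by
  subst hD hM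
  set A := Φᵀ * Matrix.diagonal d * (γ • P - 1) * Φ with hA
  set b := (Φᵀ * Matrix.diagonal d).mulVec R with hb
  have hneg : ∀ x : Fin q → ℝ, x ≠ 0 → x ⬝ᵥ A.mulVec x < 0 := fun x hx =>
    negdef n q P d γ Φ hPnonneg hProw hdpos hstat hγ0 hγ1 hΦ x hx
  have hinj : Function.Injective A.mulVec := by
    intro u v huv
    by_contra h
    have huv0 : u - v ≠ 0 := sub_ne_zero.mpr h
    have hz : A.mulVec (u - v) = 0 := by
      rw [Matrix.mulVec_sub, huv, sub_self]
    have hlt := hneg (u - v) huv0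
    rw [hz, dotProduct_zero] at hlt
    exact lt_irrefl _ hlt
  have hUnit : IsUnit A := Matrix.mulVec_injective_iff_isUnit.mp hinj
  have hfix : A.mulVec θstar + b = 0 := by
    rw [hθstar, Matrix.mulVec_neg, Matrix.mulVec_mulVec,
      Matrix.mul_nonsing_inv _ ((Matrix.isUnit_iff_isUnit_det A).mp hUnit), Matrix.one_mulVec]
    simp [hb]
  constructor
  · intro θ hθ
    apply hinj
    have : A.mulVec θ = -b := eq_neg_of_add_eq_zero_left hθ
    have h2 : A.mulVec θstar = -b := eq_neg_of_add_eq_zero_left hfix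
    rw [this, h2]
  · intro θ hθ
    obtain ⟨c, hc0, hc⟩ := coercivity q A hneg
    set y : ℝ → (Fin q → ℝ) := fun t => θ t - θstar with hy
    have hyD : ∀ t, HasDerivAt y (A.mulVec (y t)) t := by
      intro t
      have h1 := (hθ t).sub_const θstar
      refine HasDerivAt.congr_deriv h1 ?_
      rw [hy]
      simp only
      rw [Matrix.mulVec_sub]
      have : A.mulVec θstar = -b := eq_neg_of_add_eq_zero_left hfix
      rw [this]
      abel
    set g : ℝ → ℝ := fun t => y t ⬝ᵥ y t with hg
    have hgD : ∀ t, HasDerivAt g (2 * (y t ⬝ᵥ A.mulVec (y t))) t := by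
      intro t
      have hcoord : ∀ i, HasDerivAt (fun s => y s i) (A.mulVec (y t) i) t :=
        fun i => hasDerivAt_pi.mp (hyD t) i
      have hsum : HasDerivAt (fun s => ∑ i, y s i * y s i)
          (∑ i, (A.mulVec (y t) i * y t i + y t i * A.mulVec (y t) i)) t :=
        HasDerivAt.fun_sum fun i _ => (hcoord i).mul (hcoord i)
      refine HasDerivAt.congr_deriv hsum ?_
      simp only [dotProduct]
      rw [Finset.mul_sum]
      apply Finset.sum_congr rfl
      intro i _
      ring
    have hgnonneg : ∀ t, 0 ≤ g t :=
      fun t => Finset.sum_nonneg fun i _ => mul_self_nonneg _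
    set h : ℝ → ℝ := fun t => g t * Real.exp (c * t) with hh
    have hhD : ∀ t, HasDerivAt h
        (2 * (y t ⬝ᵥ A.mulVec (y t)) * Real.exp (c * t) + g t * (Real.exp (c * t) * c)) t := by
      intro t
      have he : HasDerivAt (fun s : ℝ => Real.exp (c * s)) (Real.exp (c * t) * c) t := by
        simpa using (((hasDerivAt_id t).const_mul c).exp)
      exact (hgD t).mul he
    have hderiv_nonpos : ∀ t, deriv h t ≤ 0 := by
      intro t
      rw [(hhD t).deriv]
      have h1 := hc (y t)
      have h2 : 0 < Real.exp (c * t) := Real.exp_pos _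
      have h3 := hgnonneg t
      have hgy : y t ⬝ᵥ y t = g t := rfl
      nlinarith [mul_le_mul_of_nonneg_right h1 h2.le,
        mul_nonneg (mul_nonneg hc0.le h3) h2.le]
    have hanti : Antitone h :=
      antitone_of_deriv_nonpos (fun t => (hhD t).differentiableAt) hderiv_nonpos
    have hgbound : ∀ t : ℝ, 0 ≤ t → g t ≤ g 0 * Real.exp (-(c * t)) := by
      intro t ht
      have := hanti ht
      simp only [hh] at this
      rw [mul_zero, Real.exp_zero, mul_one] at this
      rw [Real.exp_neg, ← div_eq_mul_inv, le_div_iff₀ (Real.exp_pos _)]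
      exact this
    have hgto : Tendsto g atTop (nhds 0) := by
      have hupper : Tendsto (fun t => g 0 * Real.exp (-(c * t))) atTop (nhds 0) := by
        have h1 : Tendsto (fun t : ℝ => c * t) atTop atTop :=
          Tendsto.const_mul_atTop hc0 tendsto_id
        have h2 : Tendsto (fun t : ℝ => Real.exp (-(c * t))) atTop (nhds 0) :=
          Real.tendsto_exp_neg_atTop_nhds_zero.comp h1
        simpa using h2.const_mul (g 0)
      apply tendsto_of_tendsto_of_tendsto_of_le_of_le' tendsto_const_nhds hupper
      · exact Eventually.of_forall hgnonneg
      · filter_upwards [eventually_ge_atTop (0:ℝ)] with t ht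
        exact hgbound t ht
    have hyto : Tendsto y atTop (nhds 0) := by
      rw [tendsto_zero_iff_norm_tendsto_zero]
      have hsq : Tendsto (fun t => Real.sqrt (g t)) atTop (nhds 0) := by
        have := (Real.continuous_sqrt.tendsto 0).comp hgto
        simpa [Function.comp_def] using this
      apply tendsto_of_tendsto_of_tendsto_of_le_of_le' tendsto_const_nhds hsq
      · exact Eventually.of_forall fun t => norm_nonneg _
      · apply Eventually.of_forall
        intro t
        apply pi_norm_le_iff_of_nonneg (Real.sqrt_nonneg _) |>.mpr
        intro i
        have h1 : (y t i) * (y t i) ≤ g t :=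
          Finset.single_le_sum (f := fun j => y t j * y t j)
            (fun j _ => mul_self_nonneg _) (Finset.mem_univ i)
        have : ‖y t i‖ = Real.sqrt (y t i * y t i) := by
          rw [Real.sqrt_mul_self_eq_abs]; rfl
        rw [this]
        exact Real.sqrt_le_sqrt h1
    have : Tendsto (fun t => y t + θstar) atTop (nhds (0 + θstar)) :=
      hyto.add_const θstar
    simpa [hy] using this
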